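/- Let A be a set of positive integers with 1 ∈ A. If A has positive lower asymptotic density, then A is an additive basis, i.e., there exists a positive integer k such that every natural number is the sum of at most k elements of A. -/
import Mathlib


open Filter

open scoped Classical in
/-- Number of elements of `X` in `[1, n]`. -/
noncomputable def cntA (X : Set ℕ) (n : ℕ) : ℕ :=
  ((Finset.Icc 1 n).filter (· ∈ X)).card

open scoped Classical in
lemma cntA_def (X : Set ℕ) (n : ℕ) :
    cntA X n = ((Finset.Icc 1 n).filter (· ∈ X)).card := rfl

lemma cntA_le (X : Set ℕ) (n : ℕ) : cntA X n ≤ n := by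
  classical
  calc cntA X n ≤ (Finset.Icc 1 n).card := Finset.card_filter_le _ _
  _ = n := by simp

lemma cntA_mono (X Y : Set ℕ) (h : X ⊆ Y) (n : ℕ) : cntA X n ≤ cntA Y n := by
  classical
  apply Finset.card_le_card
  intro x hx
  obtain ⟨hxI, hxX⟩ := Finset.mem_filter.1 hx
  exact Finset.mem_filter.2 ⟨hxI, h hxX⟩

/-- Sums of at most `k` elements of `A`. -/
def sumsOf (A : Set ℕ) (k : ℕ) : Set ℕ :=
  {n | ∃ L : List ℕ, L.length ≤ k ∧ (∀ a ∈ L, a ∈ A) ∧ L.sum = n}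

lemma sumsOf_mono (A : Set ℕ) {j k : ℕ} (h : j ≤ k) : sumsOf A j ⊆ sumsOf A k := by
  rintro n ⟨L, hL, hmem, hsum⟩
  exact ⟨L, hL.trans h, hmem, hsum⟩

lemma mem_sumsOf_self {A : Set ℕ} {a : ℕ} (ha : a ∈ A) : a ∈ sumsOf A 1 :=
  ⟨[a], by simp, by simpa using ha, by simp⟩

lemma add_mem_sumsOf {A : Set ℕ} {a b j : ℕ} (ha : a ∈ A) (hb : b ∈ sumsOf A j) :
    a + b ∈ sumsOf A (j + 1) := by
  obtain ⟨L, hL, hmem, hsum⟩ := hb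
  exact ⟨a :: L, by simpa using hL, by
    intro x hx
    rcases List.mem_cons.1 hx with h | h
    · exact h ▸ ha
    · exact hmem x h, by simp [hsum]⟩

lemma add_mem_sumsOf_add {A : Set ℕ} {a b i j : ℕ} (ha : a ∈ sumsOf A i)
    (hb : b ∈ sumsOf A j) : a + b ∈ sumsOf A (i + j) := by
  obtain ⟨L, hL, hmem, hsum⟩ := ha
  obtain ⟨M, hM, hmem', hsum'⟩ := hb
  refine ⟨L ++ M, by simpa using Nat.add_le_add hL hM, ?_, by simp [hsum, hsum']⟩
  intro x hx
  rcases List.mem_append.1 hx with h | h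
  · exact hmem x h
  · exact hmem' x h

/-- Key counting step in Schnirelmann's argument. -/
lemma key_count (A B C : Set ℕ) (β : ℝ) (hβ0 : 0 ≤ β)
    (hB : ∀ m : ℕ, β * m ≤ cntA B m)
    (hBC : B ⊆ C) (hAC : A ⊆ C)
    (hadd : ∀ a ∈ A, ∀ b ∈ B, a + b ∈ C) (n : ℕ) :
    (cntA A n : ℝ) + β * ((n : ℝ) - cntA A n) ≤ cntA C n := by
  classical
  induction n using Nat.strong_induction_on with
  | _ n IH =>
  by_cases hA : ((Finset.Icc 1 n).filter (· ∈ A)).Nonempty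
  · set a := ((Finset.Icc 1 n).filter (· ∈ A)).max' hA with ha_def
    have haF : a ∈ (Finset.Icc 1 n).filter (· ∈ A) := Finset.max'_mem _ hA
    have haIcc : a ∈ Finset.Icc 1 n := (Finset.mem_filter.1 haF).1
    have haA : a ∈ A := (Finset.mem_filter.1 haF).2
    have h1a : 1 ≤ a := (Finset.mem_Icc.1 haIcc).1
    have han : a ≤ n := (Finset.mem_Icc.1 haIcc).2
    have hmax : ∀ x ∈ (Finset.Icc 1 n).filter (· ∈ A), x ≤ a :=
      fun x hx => Finset.le_max' _ x hx
    -- split the count of A at a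
    have hsplit : (Finset.Icc 1 n).filter (· ∈ A)
        = insert a ((Finset.Icc 1 (a - 1)).filter (· ∈ A)) := by
      ext x
      simp only [Finset.mem_filter, Finset.mem_insert, Finset.mem_Icc]
      constructor
      · rintro ⟨⟨hx1, hxn⟩, hxA⟩
        have hxa : x ≤ a := hmax x (by simp [Finset.mem_filter, Finset.mem_Icc, hx1, hxn, hxA])
        rcases eq_or_lt_of_le hxa with h | h
        · exact Or.inl h
        · exact Or.inr ⟨⟨hx1, by omega⟩, hxA⟩
      · rintro (rfl | ⟨⟨hx1, hxa⟩, hxA⟩)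
        · exact ⟨⟨h1a, han⟩, haA⟩
        · exact ⟨⟨hx1, by omega⟩, hxA⟩
    have hnotmem : a ∉ (Finset.Icc 1 (a - 1)).filter (· ∈ A) := by
      simp only [Finset.mem_filter, Finset.mem_Icc]
      omega
    have hcard : cntA A n = cntA A (a - 1) + 1 := by
      rw [cntA_def, cntA_def, hsplit, Finset.card_insert_of_notMem hnotmem]
    -- count C via a translate of B
    set T1 : Finset ℕ := (Finset.Icc 1 (a - 1)).filter (· ∈ C) with hT1
    set T2 : Finset ℕ :=
      insert a (((Finset.Icc 1 (n - a)).filter (· ∈ B)).image (fun b => a + b)) with hT2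
    have hT2card : T2.card = cntA B (n - a) + 1 := by
      rw [hT2, Finset.card_insert_of_notMem, Finset.card_image_of_injective _
        (add_right_injective a)]
      · rfl
      · simp only [Finset.mem_image, Finset.mem_filter, Finset.mem_Icc]
        rintro ⟨b, ⟨⟨hb1, _⟩, _⟩, hab⟩
        omega
    have hdisj : Disjoint T1 T2 := by
      rw [Finset.disjoint_left]
      intro x hx1 hx2
      have hx1' : x ≤ a - 1 := (Finset.mem_Icc.1 (Finset.mem_filter.1 hx1).1).2
      rw [hT2] at hx2
      rcases Finset.mem_insert.1 hx2 with rfl | hx2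
      · omega
      · obtain ⟨b, hb, rfl⟩ := Finset.mem_image.1 hx2
        have := (Finset.mem_Icc.1 (Finset.mem_filter.1 hb).1).1
        omega
    have hsub : T1 ∪ T2 ⊆ (Finset.Icc 1 n).filter (· ∈ C) := by
      intro x hx
      rcases Finset.mem_union.1 hx with hx | hx
      · obtain ⟨hxI, hxC⟩ := Finset.mem_filter.1 hx
        have := Finset.mem_Icc.1 hxI
        exact Finset.mem_filter.2 ⟨Finset.mem_Icc.2 ⟨this.1, by omega⟩, hxC⟩
      · rw [hT2] at hx
        rcases Finset.mem_insert.1 hx with rfl | hx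
        · exact Finset.mem_filter.2 ⟨Finset.mem_Icc.2 ⟨h1a, han⟩, hAC haA⟩
        · obtain ⟨b, hb, rfl⟩ := Finset.mem_image.1 hx
          obtain ⟨hbI, hbB⟩ := Finset.mem_filter.1 hb
          have hb' := Finset.mem_Icc.1 hbI
          refine Finset.mem_filter.2 ⟨Finset.mem_Icc.2 ⟨by omega, by omega⟩, hadd a haA b hbB⟩
    have hCge : cntA C (a - 1) + (cntA B (n - a) + 1) ≤ cntA C n := by
      calc cntA C (a - 1) + (cntA B (n - a) + 1) = T1.card + T2.card := by
            rw [hT2card]; rfl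
        _ = (T1 ∪ T2).card := (Finset.card_union_of_disjoint hdisj).symm
        _ ≤ cntA C n := Finset.card_le_card hsub
    have hIH := IH (a - 1) (by omega)
    have hBn := hB (n - a)
    have hka : cntA A (a - 1) ≤ a - 1 := cntA_le _ _
    -- cast arithmetic
    have c1 : ((a - 1 : ℕ) : ℝ) = (a : ℝ) - 1 := by
      push_cast [Nat.cast_sub h1a]; ring
    have c2 : ((n - a : ℕ) : ℝ) = (n : ℝ) - a := by
      push_cast [Nat.cast_sub han]; ring
    rw [hcard]
    have hCge' : (cntA C (a - 1) : ℝ) + (cntA B (n - a) : ℝ) + 1 ≤ cntA C n := by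
      exact_mod_cast hCge
    rw [c1] at hIH
    rw [c2] at hBn
    push_cast
    linarith
  · have h0 : cntA A n = 0 := by
      rw [cntA_def, Finset.card_eq_zero]
      exact Finset.not_nonempty_iff_eq_empty.1 hA
    have h1 : cntA B n ≤ cntA C n := cntA_mono _ _ hBC n
    have h2 := hB n
    rw [h0]
    push_cast
    have : (cntA B n : ℝ) ≤ cntA C n := by exact_mod_cast h1
    linarith

/-- Iterated density bound. -/
lemma iter_count (A : Set ℕ) (σ : ℝ) (hσ0 : 0 ≤ σ) (hσ1 : σ ≤ 1)
    (hA : ∀ m : ℕ, σ * m ≤ cntA A m) (j : ℕ) (m : ℕ) :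
    (1 - (1 - σ) ^ j) * m ≤ cntA (sumsOf A j) m := by
  induction j generalizing m with
  | zero => simp [Nat.cast_nonneg]
  | succ j IH =>
    have hkey := key_count A (sumsOf A j) (sumsOf A (j + 1)) (1 - (1 - σ) ^ j)
      (by
        have h1 : (1 - σ) ^ j ≤ 1 := pow_le_one₀ (by linarith) (by linarith)
        linarith)
      IH (sumsOf_mono A (Nat.le_succ j))
      (fun a ha => sumsOf_mono A (by omega) (mem_sumsOf_self ha))
      (fun a ha b hb => add_mem_sumsOf ha hb) m
    have hAm := hA m
    have hp0 : 0 ≤ (1 - σ) ^ j := pow_nonneg (by linarith) j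
    have hp1 : (1 - σ) ^ j ≤ 1 := pow_le_one₀ (by linarith) (by linarith)
    have hAle : (cntA A m : ℝ) ≤ m := by exact_mod_cast cntA_le A m
    -- goal: (1 - (1-σ)^(j+1)) * m ≤ cntA (sumsOf A (j+1)) m
    have expand : (1 : ℝ) - (1 - σ) ^ (j + 1) = 1 - (1 - σ) * (1 - σ) ^ j := by
      ring
    rw [expand]
    nlinarith [hkey, hAm, hp0, hp1, hAle]

/-- Schnirelmann's theorem (consequence): a set of positive integers containing `1` and
having positive lower asymptotic density is an additive basis: there is `k ≥ 1` such that
every natural number is the sum of at most `k` elements of `A`. -/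
theorem additive_basis_of_positive_density (A : Set ℕ) (hpos : ∀ a ∈ A, 0 < a)
    (h1 : 1 ∈ A)
    (hd : 0 < Filter.atTop.liminf (fun n : ℕ => ((A ∩ Set.Icc 1 n).ncard : ℝ) / n)) :
    ∃ k : ℕ, 0 < k ∧ ∀ n : ℕ, ∃ L : List ℕ,
      L.length ≤ k ∧ (∀ a ∈ L, a ∈ A) ∧ L.sum = n := by
  classical
  -- relate ncard to cntA
  have hncard : ∀ n : ℕ, (A ∩ Set.Icc 1 n).ncard = cntA A n := by
    intro n
    rw [cntA_def]
    rw [show A ∩ Set.Icc 1 n = ↑((Finset.Icc 1 n).filter (· ∈ A)) by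
      ext x
      simp only [Set.mem_inter_iff, Set.mem_Icc, Finset.coe_filter, Finset.mem_Icc,
        Set.mem_setOf_eq]
      tauto]
    exact Set.ncard_coe_finset _
  set d := Filter.atTop.liminf (fun n : ℕ => ((A ∩ Set.Icc 1 n).ncard : ℝ) / n) with hd_def
  -- get eventual lower bound d/2
  have hbdd : Filter.atTop.IsBoundedUnder (· ≥ ·)
      (fun n : ℕ => ((A ∩ Set.Icc 1 n).ncard : ℝ) / n) := by
    refine Filter.isBoundedUnder_of ⟨0, fun n => ?_⟩
    show (0:ℝ) ≤ ((A ∩ Set.Icc 1 n).ncard : ℝ) / n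
    positivity
  have hev : ∀ᶠ n : ℕ in atTop, d / 2 < ((A ∩ Set.Icc 1 n).ncard : ℝ) / n :=
    eventually_lt_of_lt_liminf (by linarith) hbdd
  obtain ⟨N, hN⟩ := Filter.eventually_atTop.1 hev
  set N' : ℕ := max N 1 with hN'
  set σ : ℝ := min (d / 2) (1 / N') with hσ_def
  have hN'pos : 0 < N' := lt_of_lt_of_le one_pos (le_max_right N 1)
  have hσpos : 0 < σ := by
    apply lt_min (by linarith)
    positivity
  have hσ1 : σ ≤ 1 := by
    refine (min_le_right _ _).trans ?_
    rw [div_le_one (by exact_mod_cast hN'pos)]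
    exact_mod_cast hN'pos
  -- pointwise density bound
  have hAσ : ∀ m : ℕ, σ * m ≤ cntA A m := by
    intro m
    rcases Nat.eq_zero_or_pos m with rfl | hm
    · simp
    rcases le_or_gt N m with hNm | hNm
    · have := hN m hNm
      rw [hncard m] at this
      have hm' : (0 : ℝ) < m := by exact_mod_cast hm
      have : d / 2 * m ≤ cntA A m := by
        rw [lt_div_iff₀ hm'] at this
        linarith
      calc σ * m ≤ d / 2 * m := by
            apply mul_le_mul_of_nonneg_right (min_le_left _ _) (le_of_lt hm')
        _ ≤ cntA A m := this
    · -- small m : use 1 ∈ A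
      have h1m : 1 ≤ cntA A m := by
        rw [cntA_def]
        refine Finset.card_pos.2 ⟨1, Finset.mem_filter.2 ⟨Finset.mem_Icc.2 ⟨le_refl _, hm⟩, h1⟩⟩
      have hmN' : (m : ℝ) ≤ N' := by
        have : m ≤ N' := by omega
        exact_mod_cast this
      calc σ * m ≤ (1 / N') * m := by
            apply mul_le_mul_of_nonneg_right (min_le_right _ _) (Nat.cast_nonneg m)
        _ ≤ 1 := by
            rw [div_mul_eq_mul_div, div_le_one (by exact_mod_cast hN'pos)]
            linarith
        _ ≤ cntA A m := by exact_mod_cast h1m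
  -- choose j with (1-σ)^j < 1/2
  obtain ⟨j, hj⟩ : ∃ j : ℕ, (1 - σ) ^ j < 1 / 2 := by
    obtain ⟨j, hj⟩ := exists_pow_lt_of_lt_one (by norm_num : (0:ℝ) < 1/2) (by linarith : 1 - σ < 1)
    exact ⟨j, hj⟩
  have hβ : (1 : ℝ) / 2 < 1 - (1 - σ) ^ j := by linarith
  have hjpos : 0 < j := by
    rcases Nat.eq_zero_or_pos j with rfl | h
    · simp at hj; linarith
    · exact h
  refine ⟨2 * j, by omega, fun n => ?_⟩
  -- show n ∈ sumsOf A (2*j)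
  suffices h : n ∈ sumsOf A (2 * j) by exact h
  rcases Nat.lt_or_ge n 2 with hn2 | hn2
  · interval_cases n
    · exact ⟨[], by simp, by simp, by simp⟩
    · exact sumsOf_mono A (by omega) (mem_sumsOf_self h1)
  · -- pigeonhole
    set m := n - 1 with hm_def
    have hm1 : 1 ≤ m := by omega
    set X : Finset ℕ := (Finset.Icc 1 m).filter (· ∈ sumsOf A j) with hX
    set Y : Finset ℕ := X.image (fun c => n - c) with hY
    have hXcard : (1 - (1 - σ) ^ j) * m ≤ X.card := by
      have := iter_count A σ (le_of_lt hσpos) hσ1 hAσ j m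
      rwa [cntA_def] at this
    have hXbig : m < 2 * X.card := by
      have hm' : (1 : ℝ) ≤ m := by exact_mod_cast hm1
      have : (m : ℝ) / 2 < X.card := by
        calc (m : ℝ) / 2 < (1 - (1 - σ) ^ j) * m := by nlinarith
          _ ≤ X.card := hXcard
      have : (m : ℝ) < 2 * X.card := by linarith
      exact_mod_cast this
    have hYcard : Y.card = X.card := by
      rw [hY]
      apply Finset.card_image_of_injOn
      intro x hx y hy hxy
      have hx' := Finset.mem_Icc.1 (Finset.mem_filter.1 hx).1
      have hy' := Finset.mem_Icc.1 (Finset.mem_filter.1 hy).1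
      have hxy' : n - x = n - y := hxy
      omega
    have hYsub : Y ⊆ Finset.Icc 1 m := by
      intro y hy
      obtain ⟨c, hc, rfl⟩ := Finset.mem_image.1 hy
      have hc' := Finset.mem_Icc.1 (Finset.mem_filter.1 hc).1
      exact Finset.mem_Icc.2 ⟨by omega, by omega⟩
    have hXsub : X ⊆ Finset.Icc 1 m := Finset.filter_subset _ _
    have hnd : ¬ Disjoint X Y := by
      intro hdisj
      have h1' : (X ∪ Y).card = X.card + Y.card := Finset.card_union_of_disjoint hdisj
      have h2' : (X ∪ Y).card ≤ m := by
        have := Finset.card_le_card (Finset.union_subset hXsub hYsub)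
        simpa using this
      omega
    obtain ⟨x, hxX, hxY⟩ := Finset.not_disjoint_iff.1 hnd
    obtain ⟨c, hcX, hcx⟩ := Finset.mem_image.1 hxY
    have hxS : x ∈ sumsOf A j := (Finset.mem_filter.1 hxX).2
    have hcS : c ∈ sumsOf A j := (Finset.mem_filter.1 hcX).2
    have hc' := Finset.mem_Icc.1 (Finset.mem_filter.1 hcX).1
    have hcx' : n - c = x := by simpa using hcx
    have hsum : x + c = n := by omega
    have := add_mem_sumsOf_add hxS hcS
    rw [hsum] at this
    exact sumsOf_mono A (by omega) this
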